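/- Let (R, 𝔪) be a Noetherian local ring and let a₁,…,a_d ∈ 𝔪 be elements whose initial forms in_𝔪(a_i) ∈ gr_𝔪(R) generate an ideal whose radical equals the irrelevant ideal ⊕_{n≥1} 𝔪^n/𝔪^{n+1}. Then the radical of the ideal ⟨a₁,…,a_d⟩ in R equals 𝔪, i.e. ⟨a₁,…,a_d⟩ is 𝔪-primary. -/

import Mathlib

open Polynomial
set_option maxHeartbeats 1000000
set_option synthInstance.maxHeartbeats 400000

noncomputable section

/-- The associated graded ring `gr_𝔞(R)`, realized as `Rees(𝔞)/𝔞·Rees(𝔞)`. -/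
abbrev AssocGradedRing {R : Type} [CommRing R] (a : Ideal R) : Type :=
  ↥(reesAlgebra a) ⧸ (Ideal.map (algebraMap R ↥(reesAlgebra a)) a)

/-- The initial form in `gr_𝔞(R)` of an element `x ∈ 𝔞^n`, i.e. the class of `x·tⁿ`. -/
def initialForm {R : Type} [CommRing R] (a : Ideal R) (n : ℕ) (x : R) (hx : x ∈ a ^ n) :
    AssocGradedRing a :=
  Ideal.Quotient.mk _ ⟨Polynomial.monomial n x, reesAlgebra.monomial_mem.2 hx⟩

/-- The augmentation `gr_𝔞(R) → R/𝔞` (projection onto the degree-zero part);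
its kernel is the irrelevant ideal `⨁_{n ≥ 1} 𝔞^n/𝔞^{n+1}`. -/
def grAugmentation {R : Type} [CommRing R] (a : Ideal R) : AssocGradedRing a →+* R ⧸ a :=
  Ideal.Quotient.lift _
    ((Ideal.Quotient.mk a).comp
      ((Polynomial.constantCoeff (R := R)).comp (Subalgebra.val (reesAlgebra a)).toRingHom))
    (fun x hx => by
      revert x
      rw [show (∀ x ∈ Ideal.map (algebraMap R ↥(reesAlgebra a)) a,
          ((Ideal.Quotient.mk a).comp
            (constantCoeff.comp (reesAlgebra a).val.toRingHom)) x = 0) ↔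
          Ideal.map (algebraMap R ↥(reesAlgebra a)) a ≤
            RingHom.ker ((Ideal.Quotient.mk a).comp
              (constantCoeff.comp (reesAlgebra a).val.toRingHom)) from Iff.rfl,
        Ideal.map_le_iff_le_comap]
      intro y hy
      simp only [Ideal.mem_comap, RingHom.mem_ker, RingHom.comp_apply,
        AlgHom.toRingHom_eq_coe, RingHom.coe_coe, Subalgebra.coe_val,
        Subalgebra.coe_algebraMap, Polynomial.algebraMap_eq, Polynomial.constantCoeff_apply, Polynomial.coeff_C_zero,
        Ideal.Quotient.eq_zero_iff_mem]
      exact hy)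


section Aux

variable {R : Type} [CommRing R] (a : Ideal R)

theorem grAugmentation_initialForm (k : ℕ) (x : R) (hx : x ∈ a ^ k) :
    grAugmentation a (initialForm a k x hx) =
      Ideal.Quotient.mk a (if 0 = k then x else 0) := by
  simp only [grAugmentation, initialForm, Ideal.Quotient.lift_mk, RingHom.comp_apply,
    AlgHom.toRingHom_eq_coe, RingHom.coe_coe, Subalgebra.coe_val,
    Polynomial.constantCoeff_apply, Polynomial.coeff_monomial]
  by_cases h : k = 0
  · simp [h]
  · rw [if_neg h, if_neg fun e => h e.symm]

theorem initialForm_add (k : ℕ) (x y : R) (hx : x ∈ a ^ k) (hy : y ∈ a ^ k) :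
    initialForm a k (x + y) (Ideal.add_mem _ hx hy) =
      initialForm a k x hx + initialForm a k y hy := by
  unfold initialForm
  rw [← map_add]
  congr 1
  ext : 1
  simp [map_add]

theorem initialForm_mul (j k : ℕ) (x y : R) (hx : x ∈ a ^ j) (hy : y ∈ a ^ k) :
    initialForm a (j + k) (x * y) (by rw [pow_add]; exact Ideal.mul_mem_mul hx hy) =
      initialForm a j x hx * initialForm a k y hy := by
  unfold initialForm
  rw [← map_mul]
  congr 1
  ext : 1
  simp [Polynomial.monomial_mul_monomial]

theorem initialForm_mem_ker_pow (k : ℕ) :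
    ∀ x, ∀ hx : x ∈ a ^ k,
      initialForm a k x hx ∈ (RingHom.ker (grAugmentation a)) ^ k := by
  induction k with
  | zero => intro x hx; rw [show (RingHom.ker (grAugmentation a)) ^ 0 = ⊤ from Ideal.one_eq_top]; exact Submodule.mem_top
  | succ k ih =>
    intro x hx
    have hx' : x ∈ a ^ k * a := by rwa [← pow_succ]
    refine Submodule.mul_induction_on'
      (C := fun z _ => ∀ hz : z ∈ a ^ (k + 1),
        initialForm a (k + 1) z hz ∈ (RingHom.ker (grAugmentation a)) ^ (k + 1))
      ?_ ?_ hx' hx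
    · intro m hm c hc hmc
      have hc1 : c ∈ a ^ 1 := by rwa [pow_one]
      have heq : initialForm a (k + 1) (m * c) hmc =
          initialForm a k m hm * initialForm a 1 c hc1 := initialForm_mul a k 1 m c hm hc1
      rw [heq, show RingHom.ker (grAugmentation a) ^ (k + 1) = RingHom.ker (grAugmentation a) ^ k * RingHom.ker (grAugmentation a) from Submodule.pow_succ _]
      refine Ideal.mul_mem_mul (ih m hm) ?_
      rw [RingHom.mem_ker, grAugmentation_initialForm]
      simp
    · intro y hy1 z hz1 hy hz hyz
      have hy' : y ∈ a ^ (k + 1) := by rw [pow_succ]; exact hy1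
      have hz' : z ∈ a ^ (k + 1) := by rw [pow_succ]; exact hz1
      rw [show initialForm a (k+1) (y+z) hyz = initialForm a (k+1) y hy' + initialForm a (k+1) z hz'
        from initialForm_add a (k+1) y z hy' hz']
      exact Ideal.add_mem _ (hy hy') (hz hz')

theorem coeff_mul_monomial_mem {I : Ideal R} (p : R[X]) (t k : ℕ) {r : R} (hr : r ∈ I) :
    (p * monomial t r).coeff k ∈ I := by
  rw [← C_mul_X_pow_eq_monomial, ← mul_assoc, coeff_mul_X_pow']
  split
  · rw [coeff_mul_C]; exact I.mul_mem_left _ hr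
  · exact I.zero_mem

theorem coeff_mem_of_mem_map (k : ℕ) (q : ↥(reesAlgebra a))
    (hq : q ∈ Ideal.map (algebraMap R ↥(reesAlgebra a)) a) :
    (q : R[X]).coeff k ∈ a ^ (k + 1) := by
  have h2 : q ∈ a • (⊤ : Submodule R ↥(reesAlgebra a)) := by
    rw [Ideal.smul_top_eq_map]; exact hq
  refine Submodule.smul_induction_on h2 ?_ ?_
  · intro r hr f _
    have he : ((r • f : ↥(reesAlgebra a)) : R[X]) = r • (f : R[X]) := rfl
    rw [he, Polynomial.coeff_smul, smul_eq_mul, mul_comm, pow_succ]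
    exact Ideal.mul_mem_mul ((mem_reesAlgebra_iff a f.1).mp f.2 k) hr
  · intro f g hf hg
    rw [show ((f + g : ↥(reesAlgebra a)) : R[X]) = (f : R[X]) + g from rfl, coeff_add]
    exact Ideal.add_mem _ hf hg

theorem coeff_span_monomial {d : ℕ} (k : ℕ) (t : Fin d → ℕ) (b : Fin d → R)
    (e : Fin d → ↥(reesAlgebra a)) (he : ∀ i, (e i : R[X]) = monomial (t i) (b i))
    (y : ↥(reesAlgebra a)) (hy : y ∈ Ideal.span (Set.range e)) :
    (y : R[X]).coeff k ∈ Ideal.span (Set.range b) := by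
  obtain ⟨c, rfl⟩ := Ideal.mem_span_range_iff_exists_fun.mp hy
  rw [show ((∑ i, c i * e i : ↥(reesAlgebra a)) : R[X]) = ∑ i, (c i : R[X]) * (e i : R[X]) by
      push_cast; rfl,
    Polynomial.finset_sum_coeff]
  refine Ideal.sum_mem _ fun i _ => ?_
  rw [he i]
  exact coeff_mul_monomial_mem _ _ _ (Ideal.subset_span ⟨i, rfl⟩)

end Aux

/-- If `a₁,…,a_d ∈ 𝔪` have initial forms in `gr_𝔪(R)` generating an
ideal whose radical is the irrelevant ideal, then `⟨a₁,…,a_d⟩` is `𝔪`-primary: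
its radical equals `𝔪`. -/
theorem radical_span_eq_maximalIdeal_of_initialForms (R : Type) [CommRing R]
    [IsNoetherianRing R] [IsLocalRing R] (d : ℕ) (a : Fin d → R) (n : Fin d → ℕ)
    (hmem : ∀ i, a i ∈ IsLocalRing.maximalIdeal R ^ n i)
    (hnot : ∀ i, a i ∉ IsLocalRing.maximalIdeal R ^ (n i + 1))
    (hrad : Ideal.radical (R := AssocGradedRing (IsLocalRing.maximalIdeal R))
        (Ideal.span (Set.range fun i =>
        initialForm (IsLocalRing.maximalIdeal R) (n i) (a i) (hmem i))) =
      RingHom.ker (grAugmentation (IsLocalRing.maximalIdeal R))) :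
    (Ideal.span (Set.range a)).radical = IsLocalRing.maximalIdeal R := by
  set 𝔪 := IsLocalRing.maximalIdeal R with h𝔪
  set I := Ideal.span (Set.range a) with hIdef
  set K := RingHom.ker (grAugmentation 𝔪) with hKdef
  set J := Ideal.span (Set.range fun i => initialForm 𝔪 (n i) (a i) (hmem i)) with hJdef
  -- every n i is positive
  have hnge1 : ∀ i, 1 ≤ n i := by
    intro i
    by_contra h
    have hni : n i = 0 := by omega
    have hmem0 : initialForm 𝔪 (n i) (a i) (hmem i) ∈ K := by
      rw [← hrad]
      exact Ideal.le_radical (Ideal.subset_span ⟨i, rfl⟩)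
    rw [hKdef, RingHom.mem_ker, grAugmentation_initialForm, hni, if_pos rfl,
      Ideal.Quotient.eq_zero_iff_mem] at hmem0
    apply hnot i
    rw [hni, pow_one]
    exact hmem0
  have haI : ∀ i, a i ∈ 𝔪 := fun i =>
    Ideal.pow_le_self (by have := hnge1 i; omega) (hmem i)
  have hIm : I ≤ 𝔪 := Ideal.span_le.2 (Set.range_subset_iff.2 haI)
  have hmtop : 𝔪 ≠ ⊤ := (IsLocalRing.maximalIdeal.isMaximal R).ne_top
  have hItop : I ≠ ⊤ := fun h => hmtop (top_le_iff.1 (h ▸ hIm))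
  -- Noetherianity of the associated graded ring gives a power of K inside J
  obtain ⟨N₀, hN₀⟩ := Ideal.exists_radical_pow_le_of_fg (R := AssocGradedRing 𝔪) J (IsNoetherian.noetherian _)
  rw [hrad] at hN₀
  set N := N₀ + 1 with hNdef
  have hKN : K ^ N ≤ J := le_trans (Ideal.pow_le_pow_right (Nat.le_succ N₀)) hN₀
  -- the key approximation step
  have H : ∀ k, N ≤ k → 𝔪 ^ k ≤ I ⊔ 𝔪 ^ (k + 1) := by
    intro k hk x hx
    have h1 : initialForm 𝔪 k x hx ∈ J :=
      hKN (Ideal.pow_le_pow_right hk (initialForm_mem_ker_pow 𝔪 k x hx))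
    set e : Fin d → ↥(reesAlgebra 𝔪) := fun i =>
      ⟨Polynomial.monomial (n i) (a i), reesAlgebra.monomial_mem.2 (hmem i)⟩ with hedef
    have hJ2 : J = Ideal.map (Ideal.Quotient.mk _) (Ideal.span (Set.range e)) := by
      rw [Ideal.map_span, ← Set.range_comp]
      rfl
    rw [hJ2] at h1
    obtain ⟨y, hy, hyx⟩ :=
      (Ideal.mem_map_iff_of_surjective _ Ideal.Quotient.mk_surjective).mp h1
    set m : ↥(reesAlgebra 𝔪) := ⟨Polynomial.monomial k x, reesAlgebra.monomial_mem.2 hx⟩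
      with hmdef
    have hq : m - y ∈ Ideal.map (algebraMap R ↥(reesAlgebra 𝔪)) 𝔪 := by
      have h2 : y - m ∈ Ideal.map (algebraMap R ↥(reesAlgebra 𝔪)) 𝔪 :=
        Ideal.Quotient.eq.mp hyx
      have h3 : m - y = -(y - m) := by ring
      rw [h3]
      exact neg_mem h2
    have hcy : (y : R[X]).coeff k ∈ I :=
      coeff_span_monomial 𝔪 k n a e (fun i => rfl) y hy
    have hcq : ((m - y : ↥(reesAlgebra 𝔪)) : R[X]).coeff k ∈ 𝔪 ^ (k + 1) :=
      coeff_mem_of_mem_map 𝔪 k _ hq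
    have hx2 : (y : R[X]).coeff k + ((m - y : ↥(reesAlgebra 𝔪)) : R[X]).coeff k = x := by
      rw [show ((m - y : ↥(reesAlgebra 𝔪)) : R[X]) = (m : R[X]) - (y : R[X]) from rfl,
        Polynomial.coeff_sub, hmdef]
      simp [Polynomial.coeff_monomial]
    exact Submodule.mem_sup.2 ⟨_, hcy, _, hcq, hx2⟩
  -- iterate
  have Hchain : ∀ j, 𝔪 ^ N ≤ I ⊔ 𝔪 ^ (N + j) := by
    intro j
    induction j with
    | zero => exact le_sup_right
    | succ j ih =>
      calc 𝔪 ^ N ≤ I ⊔ 𝔪 ^ (N + j) := ih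
        _ ≤ I ⊔ (I ⊔ 𝔪 ^ (N + j + 1)) :=
            sup_le_sup_left (H (N + j) (Nat.le_add_right _ _)) _
        _ = I ⊔ 𝔪 ^ (N + (j + 1)) := by rw [← sup_assoc, sup_idem, Nat.add_assoc]
  -- Krull intersection in R ⧸ I
  have hpowI : 𝔪 ^ N ≤ I := by
    intro x hx
    haveI : Nontrivial (R ⧸ I) := Ideal.Quotient.nontrivial_iff.mpr hItop
    haveI : IsLocalRing (R ⧸ I) :=
      IsLocalRing.of_surjective' (Ideal.Quotient.mk I) Ideal.Quotient.mk_surjective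
    set m' := Ideal.map (Ideal.Quotient.mk I) 𝔪 with hm'def
    have hle : m' ≤ IsLocalRing.maximalIdeal (R ⧸ I) := by
      rw [hm'def, Ideal.map_le_iff_le_comap]
      intro z hz
      rw [Ideal.mem_comap, IsLocalRing.mem_maximalIdeal]
      intro hu
      obtain ⟨v, hv⟩ := hu.exists_right_inv
      obtain ⟨b, rfl⟩ := Ideal.Quotient.mk_surjective v
      rw [← map_mul, ← map_one (Ideal.Quotient.mk I), Ideal.Quotient.eq] at hv
      have h1 : z * b - 1 ∈ 𝔪 := hIm hv
      have h2 : z * b ∈ 𝔪 := Ideal.mul_mem_right _ _ hz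
      have h3 : (1 : R) ∈ 𝔪 := by simpa using Ideal.sub_mem _ h2 h1
      exact hmtop ((Ideal.eq_top_iff_one 𝔪).2 h3)
    have hm't : m' ≠ ⊤ := fun h =>
      (IsLocalRing.maximalIdeal.isMaximal _).ne_top (top_le_iff.1 (h ▸ hle))
    have hbot := Ideal.iInf_pow_eq_bot_of_isLocalRing m' hm't
    have hmem' : ∀ j, Ideal.Quotient.mk I x ∈ m' ^ j := by
      intro j
      obtain ⟨u, hu, v, hv, huv⟩ := Submodule.mem_sup.1 (Hchain j hx)
      have hxv : Ideal.Quotient.mk I x = Ideal.Quotient.mk I v := by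
        rw [← huv, map_add, Ideal.Quotient.eq_zero_iff_mem.2 hu, zero_add]
      rw [hxv]
      have hv' : Ideal.Quotient.mk I v ∈ m' ^ (N + j) := by
        rw [hm'def, ← Ideal.map_pow]
        exact Ideal.mem_map_of_mem _ hv
      exact Ideal.pow_le_pow_right (Nat.le_add_left j N) hv'
    have hx0 : Ideal.Quotient.mk I x = 0 := by
      have := Ideal.mem_iInf.2 hmem'
      rw [hbot] at this
      simpa using this
    exact Ideal.Quotient.eq_zero_iff_mem.1 hx0
  -- conclude
  apply le_antisymm
  · exact (Ideal.radical_mono hIm).trans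
      (le_of_eq (IsLocalRing.maximalIdeal.isMaximal R).isPrime.radical)
  · intro x hx
    exact ⟨N, hpowI (Ideal.pow_mem_pow hx N)⟩


end
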